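/- Let f be a bounded holomorphic function on the open unit disk 𝔻. If the radial limit lim_{r→1⁻} f(r e^{iθ}) exists and equals 0 for all e^{iθ} in a measurable subset E of the unit circle with positive Lebesgue measure, then f is identically zero. -/

import Mathlib

open MeasureTheory Metric Filter Complex intervalIntegral Set

noncomputable def Complex.abs : AbsoluteValue ℂ ℝ :=
  IsAbsoluteValue.toAbsoluteValue (norm : ℂ → ℝ)

@[simp] lemma Complex.norm_eq_abs (z : ℂ) : ‖z‖ = Complex.abs z := rfl

@[simp] lemma Complex.abs_ofReal (x : ℝ) : Complex.abs (x : ℂ) = |x| :=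
  Complex.norm_real x

@[simp] lemma Complex.abs_exp (z : ℂ) : Complex.abs (Complex.exp z) = Real.exp z.re :=
  Complex.norm_exp z

@[simp] lemma Complex.abs_conj (z : ℂ) : Complex.abs ((starRingEnd ℂ) z) = Complex.abs z :=
  Complex.norm_conj z

lemma Complex.continuous_abs : Continuous Complex.abs := continuous_norm

lemma Complex.normSq_eq_abs (z : ℂ) : Complex.normSq z = Complex.abs z ^ 2 :=
  Complex.normSq_eq_norm_sq z

noncomputable def ce (θ : ℝ) : ℂ := Complex.exp (θ * Complex.I)

lemma ce_cont : Continuous ce := by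
  unfold ce; fun_prop

lemma abs_ce (θ : ℝ) : Complex.abs (ce θ) = 1 := by
  simp [ce, Complex.abs_exp]

/-- Mean value property from Cauchy's integral formula. -/
lemma mvl {u : ℂ → ℂ} {ρ s : ℝ} (hu : DifferentiableOn ℂ u (ball 0 ρ))
    (hs : 0 < s) (hsρ : s < ρ) :
    ∫ θ in (0:ℝ)..(2 * Real.pi), u (s * ce θ) = (2 * Real.pi) • u 0 := by
  have hcb : closedBall (0:ℂ) s ⊆ ball 0 ρ := closedBall_subset_ball hsρ
  have h := (hu.mono hcb).circleIntegral_sub_inv_smul (w := 0)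
    (mem_ball_self hs)
  rw [circleIntegral] at h
  simp only [deriv_circleMap, circleMap, ofReal_zero, zero_add, sub_zero,
    smul_eq_mul] at h
  have key : ∀ θ : ℝ, s * Complex.exp (θ * I) * I * ((s * Complex.exp (θ * I))⁻¹ * u (s * Complex.exp (θ * I)))
      = I * u (s * ce θ) := by
    intro θ
    have hne : (s : ℂ) * Complex.exp (θ * I) ≠ 0 := by
      apply mul_ne_zero (by exact_mod_cast hs.ne') (Complex.exp_ne_zero _)
    simp only [ce]
    rw [show ∀ a b c : ℂ, a * I * (b * c) = I * (a * b) * c from fun a b c => by ring,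
      mul_inv_cancel₀ hne, mul_one]
  rw [intervalIntegral.integral_congr (g := fun θ => I * u (s * ce θ))
    (fun θ _ => key θ)] at h
  rw [intervalIntegral.integral_const_mul] at h
  have : I * ∫ θ in (0:ℝ)..(2*Real.pi), u (s * ce θ) = I * ((2 * Real.pi) • u 0) := by
    rw [h, Complex.real_smul]; push_cast; ring
  have := mul_left_cancel₀ I_ne_zero this
  exact this


noncomputable def proj01 (t : ℝ) : ℝ := max 0 (min t 1)

lemma proj01_cont : Continuous proj01 := by unfold proj01; fun_prop

lemma proj01_mem (t : ℝ) : proj01 t ∈ Icc (0:ℝ) 1 := by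
  constructor
  · exact le_max_left _ _
  · simp [proj01, min_le_right]

lemma proj01_eq {t : ℝ} (ht : t ∈ Icc (0:ℝ) 1) : proj01 t = t := by
  simp only [proj01]
  rw [min_eq_left ht.2, max_eq_right ht.1]

lemma abs_proj_mul {z : ℂ} {ρ : ℝ} (hz : z ∈ ball (0:ℂ) ρ) (t : ℝ) :
    (proj01 t : ℂ) * z ∈ ball (0:ℂ) ρ := by
  simp only [mem_ball, dist_zero_right, norm_mul] at *
  calc ‖(proj01 t : ℂ)‖ * ‖z‖ ≤ 1 * ‖z‖ := by
        apply mul_le_mul_of_nonneg_right _ (norm_nonneg _)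
        rw [Complex.norm_real, Real.norm_eq_abs, _root_.abs_of_nonneg (proj01_mem t).1]
        exact (proj01_mem t).2
    _ = ‖z‖ := one_mul _
    _ < ρ := hz

section Engine
variable {g : ℂ → ℂ} {ρ : ℝ} (hg : DifferentiableOn ℂ g (ball 0 ρ))
  (hnv : ∀ z ∈ ball (0:ℂ) ρ, g z ≠ 0)

include hg hnv in
/-- FTC along the radius: `g z = g 0 * exp (∫ t in 0..1, z * ψ (t z))`. -/
lemma claimA (hρ : 0 < ρ) {z : ℂ} (hz : z ∈ ball (0:ℂ) ρ) :
    g z = g 0 * Complex.exp (∫ t in (0:ℝ)..1,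
      z * (deriv g ((proj01 t : ℂ) * z) / g ((proj01 t : ℂ) * z))) := by
  set ψ : ℂ → ℂ := fun w => deriv g w / g w with hψ
  have hgan : AnalyticOnNhd ℂ g (ball 0 ρ) := hg.analyticOnNhd isOpen_ball
  have hderivan : AnalyticOnNhd ℂ (deriv g) (ball 0 ρ) := hgan.deriv
  have hψc : ContinuousOn ψ (ball 0 ρ) := by
    apply ContinuousOn.div
    · exact hderivan.continuousOn
    · exact hg.continuousOn
    · exact hnv
  set w : ℝ → ℂ := fun u => z * ψ ((proj01 u : ℂ) * z) with hw
  have hwc : Continuous w := by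
    apply continuous_const.mul
    apply ContinuousOn.comp_continuous hψc
    · exact (Complex.continuous_ofReal.comp proj01_cont).mul continuous_const
    · exact fun t => abs_proj_mul hz t
  set q : ℝ → ℂ := fun t => g ((t:ℂ) * z) * Complex.exp (- ∫ u in (0:ℝ)..t, w u) with hq
  have hmem : ∀ t ∈ Icc (0:ℝ) 1, (t:ℂ) * z ∈ ball (0:ℂ) ρ := by
    intro t ht
    have := abs_proj_mul hz t
    rwa [proj01_eq ht] at this
  have hderiv : ∀ t ∈ Icc (0:ℝ) 1, HasDerivAt q 0 t := by
    intro t ht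
    have htz := hmem t ht
    have h1 : HasDerivAt (fun u : ℝ => (u:ℂ) * z) z t := by
      simpa using (Complex.ofRealCLM.hasDerivAt (x := t)).mul_const z
    have h2 : HasDerivAt (fun u : ℝ => g ((u:ℂ) * z)) (deriv g ((t:ℂ)*z) * z) t := by
      exact ((hg.differentiableAt (isOpen_ball.mem_nhds htz)).hasDerivAt).comp t h1
    have h3 : HasDerivAt (fun u : ℝ => ∫ v in (0:ℝ)..u, w v) (w t) t := by
      apply intervalIntegral.integral_hasDerivAt_right
      · exact hwc.intervalIntegrable _ _
      · exact hwc.stronglyMeasurable.stronglyMeasurableAtFilter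
      · exact hwc.continuousAt
    have h4 : HasDerivAt (fun u : ℝ => Complex.exp (- ∫ v in (0:ℝ)..u, w v))
        (Complex.exp (- ∫ v in (0:ℝ)..t, w v) * (- w t)) t := by
      simpa [mul_comm] using (h3.neg).cexp
    have h5 := h2.mul h4
    convert h5 using 1
    case e'_4 => rfl
    case e'_8 => rfl
    have hwt : w t = z * ψ ((t:ℂ) * z) := by rw [hw]; simp [proj01_eq ht]
    rw [hwt, hψ]
    have hgne := hnv _ htz
    field_simp
    ring
  have hcont : ContinuousOn q (Icc 0 1) :=
    fun t ht => ((hderiv t ht).continuousAt).continuousWithinAt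
  have hconst := constant_of_has_deriv_right_zero hcont
    (fun t ht => ((hderiv t (Ico_subset_Icc_self ht)).hasDerivWithinAt))
  have h01 := hconst 1 (by norm_num)
  simp only [hq, Complex.ofReal_one, one_mul, Complex.ofReal_zero, zero_mul,
    intervalIntegral.integral_same, neg_zero, Complex.exp_zero, mul_one] at h01
  rw [← h01, mul_assoc, ← Complex.exp_add]
  simp

end Engine


lemma logAvg {g : ℂ → ℂ} {ρ s : ℝ} (hg : DifferentiableOn ℂ g (ball 0 ρ))
    (hnv : ∀ z ∈ ball (0:ℂ) ρ, g z ≠ 0) (hs : 0 < s) (hsρ : s < ρ) :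
    ∫ θ in (0:ℝ)..(2 * Real.pi), Real.log (Complex.abs (g (s * ce θ)))
      = (2 * Real.pi) * Real.log (Complex.abs (g 0)) := by
  have hρ : 0 < ρ := hs.trans hsρ
  have h0mem : (0:ℂ) ∈ ball (0:ℂ) ρ := mem_ball_self hρ
  set ψ : ℂ → ℂ := fun w => deriv g w / g w with hψ
  have hgan : AnalyticOnNhd ℂ g (ball 0 ρ) := hg.analyticOnNhd isOpen_ball
  have hψd : DifferentiableOn ℂ ψ (ball 0 ρ) :=
    (hgan.deriv.differentiableOn).div hg hnv
  have hψc : ContinuousOn ψ (ball 0 ρ) := hψd.continuousOn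
  have hzmem : ∀ θ : ℝ, (s:ℂ) * ce θ ∈ ball (0:ℂ) ρ := by
    intro θ
    simp only [mem_ball, dist_zero_right, norm_mul, Complex.norm_real,
      Real.norm_eq_abs, _root_.abs_of_pos hs]
    rw [show ‖ce θ‖ = 1 from abs_ce θ]
    simpa using hsρ
  -- the 2-variable integrand
  set P : ℝ × ℝ → ℝ :=
    fun p => ((s : ℂ) * ce p.1 * ψ ((proj01 p.2 : ℂ) * ((s:ℂ) * ce p.1))).re with hP
  have hPcont : Continuous P := by
    apply Complex.continuous_re.comp
    apply Continuous.mul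
    · exact continuous_const.mul (ce_cont.comp continuous_fst)
    · have harg : Continuous (fun p : ℝ × ℝ => (proj01 p.2 : ℂ) * ((s:ℂ) * ce p.1)) := by
        apply Continuous.mul
        · exact Complex.continuous_ofReal.comp (proj01_cont.comp continuous_snd)
        · exact continuous_const.mul (ce_cont.comp continuous_fst)
      exact hψc.comp_continuous harg (fun p => abs_proj_mul (hzmem p.1) p.2)
  -- pointwise identity from claimA
  have hptwise : ∀ θ : ℝ, Real.log (Complex.abs (g ((s:ℂ) * ce θ)))
      = Real.log (Complex.abs (g 0)) + ∫ t in (0:ℝ)..1, P (θ, t) := by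
    intro θ
    have hA := claimA hg hnv hρ (hzmem θ)
    have hIre : (∫ t in (0:ℝ)..1, ((s:ℂ) * ce θ) *
        (deriv g ((proj01 t : ℂ) * ((s:ℂ)*ce θ)) / g ((proj01 t : ℂ) * ((s:ℂ)*ce θ)))).re
        = ∫ t in (0:ℝ)..1, P (θ, t) := by
      have hcont1 : Continuous fun t : ℝ => ((s:ℂ) * ce θ) *
          (deriv g ((proj01 t : ℂ) * ((s:ℂ)*ce θ)) / g ((proj01 t : ℂ) * ((s:ℂ)*ce θ))) := by
        apply continuous_const.mul
        exact hψc.comp_continuous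
          ((Complex.continuous_ofReal.comp proj01_cont).mul continuous_const)
          (fun t => abs_proj_mul (hzmem θ) t)
      have hcc := Complex.reCLM.intervalIntegral_comp_comm
        (hcont1.intervalIntegrable (μ := volume) (0:ℝ) 1)
      simp only [Complex.reCLM_apply] at hcc
      rw [← hcc]
    have hg0ne : Complex.abs (g 0) ≠ 0 := by simpa using hnv 0 h0mem
    rw [hA, map_mul, Complex.abs_exp, Real.log_mul hg0ne (Real.exp_ne_zero _),
      Real.log_exp, hIre]
  -- Fubini: ∫θ ∫t P = 0
  have h2π : (0:ℝ) ≤ 2 * Real.pi := by positivity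
  have hQzero : ∫ θ in (0:ℝ)..(2*Real.pi), (∫ t in (0:ℝ)..1, P (θ, t)) = 0 := by
    have hint : Integrable (Function.uncurry (fun θ t => P (θ, t)))
        ((volume.restrict (Ioc 0 (2*Real.pi))).prod (volume.restrict (Ioc (0:ℝ) 1))) := by
      rw [Measure.prod_restrict]
      have h1 : IntegrableOn P ((Icc 0 (2*Real.pi)) ×ˢ (Icc (0:ℝ) 1)) volume :=
        hPcont.continuousOn.integrableOn_compact (isCompact_Icc.prod isCompact_Icc)
      have h2 := h1.mono_set (Set.prod_mono Ioc_subset_Icc_self Ioc_subset_Icc_self)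
      exact h2
    have hswap := MeasureTheory.integral_integral_swap hint
    have hinner : ∀ t : ℝ, (∫ θ in Ioc (0:ℝ) (2*Real.pi), P (θ, t)) = 0 := by
      intro t
      set u : ℂ → ℂ := fun z => z * ψ ((proj01 t : ℂ) * z) with hu
      have hud : DifferentiableOn ℂ u (ball 0 ρ) := by
        apply DifferentiableOn.mul differentiableOn_id
        exact hψd.comp ((differentiable_id.const_mul _).differentiableOn)
          (fun z hz => abs_proj_mul hz t)
      have hucont : Continuous fun θ : ℝ => u ((s:ℂ) * ce θ) :=
        hud.continuousOn.comp_continuous (continuous_const.mul ce_cont) hzmem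
      have hmv := mvl hud hs hsρ
      have hu0 : u 0 = 0 := by simp [hu]
      rw [hu0, smul_zero] at hmv
      have hre : ∫ θ in (0:ℝ)..(2*Real.pi), P (θ, t)
          = (∫ θ in (0:ℝ)..(2*Real.pi), u ((s:ℂ) * ce θ)).re := by
        have hcc := Complex.reCLM.intervalIntegral_comp_comm
          (hucont.intervalIntegrable (μ := volume) (0:ℝ) (2*Real.pi))
        simp only [Complex.reCLM_apply] at hcc
        rw [← hcc]
      rw [← intervalIntegral.integral_of_le h2π, hre, hmv]
      simp
    calc ∫ θ in (0:ℝ)..(2*Real.pi), (∫ t in (0:ℝ)..1, P (θ, t))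
        = ∫ θ in Ioc (0:ℝ) (2*Real.pi), (∫ t in Ioc (0:ℝ) 1, P (θ, t)) := by
          rw [intervalIntegral.integral_of_le h2π]
          apply setIntegral_congr_fun measurableSet_Ioc
          intro θ _
          dsimp only
          rw [intervalIntegral.integral_of_le (by norm_num : (0:ℝ) ≤ 1)]
      _ = ∫ t in Ioc (0:ℝ) 1, (∫ θ in Ioc (0:ℝ) (2*Real.pi), P (θ, t)) := hswap
      _ = 0 := by
          rw [show (fun t => ∫ θ in Ioc (0:ℝ) (2*Real.pi), P (θ, t)) = fun _ => (0:ℝ)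
            from funext hinner]
          simp
  -- assemble
  set c : ℝ := Real.log (Complex.abs (g 0)) with hc
  have hLcont : Continuous fun θ : ℝ => Real.log (Complex.abs (g ((s:ℂ) * ce θ))) := by
    rw [continuous_iff_continuousAt]
    intro θ
    have h1 : Continuous (fun θ : ℝ => Complex.abs (g ((s:ℂ) * ce θ))) :=
      Complex.continuous_abs.comp
        (hg.continuousOn.comp_continuous (continuous_const.mul ce_cont) hzmem)
    exact (Real.continuousAt_log (by simpa using hnv _ (hzmem θ))).comp h1.continuousAt
  have hQeq : (fun θ : ℝ => ∫ t in (0:ℝ)..1, P (θ, t))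
      = fun θ => Real.log (Complex.abs (g ((s:ℂ) * ce θ))) - c := by
    funext θ
    rw [hptwise θ]
    ring
  rw [hQeq] at hQzero
  rw [intervalIntegral.integral_sub (hLcont.intervalIntegrable _ _)
    (intervalIntegrable_const)] at hQzero
  rw [intervalIntegral.integral_const, smul_eq_mul, sub_zero] at hQzero
  have h := sub_eq_zero.mp hQzero
  rw [h]


lemma pfl {a : ℂ} {r : ℝ} (hr : 0 < r) (ha : Complex.abs a < r) :
    ∫ θ in (0:ℝ)..(2 * Real.pi), Real.log (Complex.abs ((r:ℂ) * ce θ - a))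
      = (2 * Real.pi) * Real.log r := by
  rcases eq_or_ne a 0 with rfl | ha0
  · have : ∀ θ : ℝ, Real.log (Complex.abs ((r:ℂ) * ce θ - 0)) = Real.log r := by
      intro θ
      rw [sub_zero, map_mul, abs_ce, mul_one, Complex.abs_ofReal, abs_of_pos hr]
    rw [intervalIntegral.integral_congr (g := fun _ => Real.log r) (fun θ _ => this θ)]
    simp [mul_comm]
  · have habs : 0 < Complex.abs a := by
      simpa [Complex.abs.pos_iff] using ha0
    set g : ℂ → ℂ := fun z => (r:ℂ) - (starRingEnd ℂ) a * z with hgdef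
    have hg : DifferentiableOn ℂ g (ball 0 (r / Complex.abs a)) := by
      apply DifferentiableOn.sub (differentiableOn_const _)
      exact (differentiable_id.const_mul _).differentiableOn
    have hnv : ∀ z ∈ ball (0:ℂ) (r / Complex.abs a), g z ≠ 0 := by
      intro z hz
      simp only [mem_ball, dist_zero_right] at hz
      intro hzero
      have : (r:ℂ) = (starRingEnd ℂ) a * z := by
        rw [hgdef] at hzero; simp only at hzero; linear_combination hzero
      have habs2 : Complex.abs ((r:ℂ)) = Complex.abs a * Complex.abs z := by
        rw [this, map_mul, Complex.abs_conj]
      rw [Complex.abs_ofReal, abs_of_pos hr] at habs2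
      have : ‖z‖ < r / Complex.abs a := hz
      rw [Complex.norm_eq_abs, lt_div_iff₀ habs] at this
      rw [mul_comm] at habs2
      linarith
    have h1ρ : (1:ℝ) < r / Complex.abs a := by
      rw [lt_div_iff₀ habs]; linarith
    have key := logAvg hg hnv one_pos h1ρ
    have hg0 : Complex.abs (g 0) = r := by
      simp [hgdef, Complex.abs_ofReal, abs_of_pos hr]
    rw [hg0] at key
    rw [← key]
    refine intervalIntegral.integral_congr fun θ _ => ?_
    congr 1
    -- |r ce θ - a| = |g (1 * ce θ)|
    have hunit : ce θ * (starRingEnd ℂ) (ce θ) = 1 := by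
      rw [Complex.mul_conj]
      norm_cast
      rw [Complex.normSq_eq_abs, abs_ce]; norm_num
    have h1 : Complex.abs ((r:ℂ) * ce θ - a)
        = Complex.abs (((r:ℂ) * ce θ - a) * (starRingEnd ℂ) (ce θ)) := by
      rw [map_mul, Complex.abs_conj, abs_ce, mul_one]
    have h2 : ((r:ℂ) * ce θ - a) * (starRingEnd ℂ) (ce θ)
        = (r:ℂ) - a * (starRingEnd ℂ) (ce θ) := by
      rw [sub_mul, mul_assoc, hunit, mul_one]
    have h3 : Complex.abs ((r:ℂ) - a * (starRingEnd ℂ) (ce θ))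
        = Complex.abs ((r:ℂ) - (starRingEnd ℂ) a * ce θ) := by
      rw [← Complex.abs_conj ((r:ℂ) - a * (starRingEnd ℂ) (ce θ))]
      congr 1
      simp [map_sub, map_mul, Complex.conj_conj, Complex.conj_ofReal]
    rw [h1, h2, h3]
    simp [hgdef]


/-- The zero set of a non-trivially-zero holomorphic function is finite in compact subdisks. -/
lemma zerosFinite {f : ℂ → ℂ} (hf : DifferentiableOn ℂ f (ball 0 1))
    {w : ℂ} (hw : w ∈ ball (0:ℂ) 1) (hfw : f w ≠ 0) {t : ℝ} (ht : t < 1) :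
    {z | z ∈ closedBall (0:ℂ) t ∧ f z = 0}.Finite := by
  rcases lt_or_ge t 0 with htneg | htpos
  · convert Set.finite_empty
    ext z
    simp only [mem_setOf_eq, mem_empty_iff_false, iff_false, not_and]
    intro hz
    rw [closedBall_eq_empty.mpr htneg] at hz
    exact absurd hz (Set.notMem_empty z)
  · have hsub : closedBall (0:ℂ) t ⊆ ball 0 1 := closedBall_subset_ball ht
    set S := {z | z ∈ closedBall (0:ℂ) t ∧ f z = 0} with hS
    have hScl : IsClosed S := by
      have h1 := (hf.continuousOn.mono hsub).preimage_isClosed_of_isClosed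
        isClosed_closedBall (isClosed_singleton (x := (0:ℂ)))
      have h2 : S = closedBall (0:ℂ) t ∩ f ⁻¹' {0} := by
        ext z; simp [hS]
      rw [h2]; exact h1
    have hScomp : IsCompact S := (isCompact_closedBall (0:ℂ) t).of_isClosed_subset hScl
      (fun z hz => hz.1)
    by_contra hinf
    have hinf2 : S.Infinite := hinf
    obtain ⟨x, hxK, hacc⟩ := hinf2.exists_accPt_of_subset_isCompact hScomp subset_rfl
    have hfreq : ∃ᶠ z in nhdsWithin x {x}ᶜ, f z = 0 := by
      have hacc2 := accPt_iff_frequently.mp hacc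
      rw [frequently_nhdsWithin_iff]
      exact hacc2.mono (fun y hy => ⟨hy.2.2, hy.1⟩)
    have han : AnalyticOnNhd ℂ f (ball 0 1) := hf.analyticOnNhd isOpen_ball
    have := han.eqOn_zero_of_preconnected_of_frequently_eq_zero
      (convex_ball (0:ℂ) 1).isPreconnected (hsub hxK.1) hfreq
    exact hfw (this hw)

/-- Finite order and local factorization at a point. -/
lemma orderFac {f : ℂ → ℂ} (hf : DifferentiableOn ℂ f (ball 0 1))
    {w : ℂ} (hw : w ∈ ball (0:ℂ) 1) (hfw : f w ≠ 0) {a : ℂ} (ha : a ∈ ball (0:ℂ) 1) :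
    ∃ (n : ℕ) (g : ℂ → ℂ), AnalyticAt ℂ g a ∧ g a ≠ 0 ∧
      (∀ᶠ z in nhds a, f z = (z - a) ^ n * g z) ∧ (f a = 0 → 1 ≤ n) := by
  have han : AnalyticOnNhd ℂ f (ball 0 1) := hf.analyticOnNhd isOpen_ball
  have hA : AnalyticAt ℂ f a := han a ha
  have hord : analyticOrderAt f a ≠ ⊤ := by
    intro htop
    have hev : ∀ᶠ z in nhds a, f z = 0 := analyticOrderAt_eq_top.mp htop
    have := han.eqOn_zero_of_preconnected_of_eventuallyEq_zero
      (convex_ball (0:ℂ) 1).isPreconnected ha hev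
    exact hfw (this hw)
  set n := (analyticOrderAt f a).toNat with hn
  have : analyticOrderAt f a = (n : ℕ∞) := (ENat.coe_toNat hord).symm
  obtain ⟨g, hgan, hgne, hfac⟩ := (hA.analyticOrderAt_eq_natCast (n := n)).mp this
  refine ⟨n, g, hgan, hgne, by simpa [smul_eq_mul] using hfac, ?_⟩
  intro hfa
  by_contra hn0
  push_neg at hn0
  interval_cases n
  have := hfac.self_of_nhds
  simp [hfa] at this
  exact hgne this.symm

/-- Divide out the factor `(z-a)^n` globally on the disk. -/
lemma divideOut {f : ℂ → ℂ} (hf : DifferentiableOn ℂ f (ball 0 1))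
    {a : ℂ} (ha : a ∈ ball (0:ℂ) 1) {n : ℕ} {g : ℂ → ℂ} (hgan : AnalyticAt ℂ g a)
    (hgne : g a ≠ 0) (hfac : ∀ᶠ z in nhds a, f z = (z - a) ^ n * g z) :
    ∃ f₁ : ℂ → ℂ, DifferentiableOn ℂ f₁ (ball 0 1) ∧ f₁ a = g a ∧
      (∀ z ∈ ball (0:ℂ) 1, f z = (z - a) ^ n * f₁ z) ∧
      (∀ z : ℂ, z ≠ a → f₁ z = f z / (z - a) ^ n) := by
  classical
  set f₁ : ℂ → ℂ := fun z => if z = a then g a else f z / (z - a) ^ n with hf₁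
  have hform : ∀ z : ℂ, z ≠ a → f₁ z = f z / (z - a) ^ n := by
    intro z hz; simp [hf₁, hz]
  have heq : f₁ =ᶠ[nhds a] g := by
    filter_upwards [hfac] with z hz
    rcases eq_or_ne z a with rfl | hza
    · simp [hf₁]
    · rw [hform z hza, hz, mul_div_cancel_left₀ _ (pow_ne_zero _ (sub_ne_zero.mpr hza))]
  refine ⟨f₁, ?_, by simp [hf₁], ?_, hform⟩
  · intro z hz
    rcases eq_or_ne z a with rfl | hza
    · exact (hgan.differentiableAt.congr_of_eventuallyEq heq).differentiableWithinAt
    · have hev : f₁ =ᶠ[nhds z] (fun w => f w / (w - a) ^ n) := by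
        filter_upwards [isOpen_ne.mem_nhds hza] with y hy
        exact hform y hy
      have hd : DifferentiableAt ℂ (fun w => f w / (w - a) ^ n) z := by
        apply DifferentiableAt.div
        · exact hf.differentiableAt (isOpen_ball.mem_nhds hz)
        · exact (differentiableAt_id.sub_const a).pow n
        · exact pow_ne_zero _ (sub_ne_zero.mpr hza)
      exact (hd.congr_of_eventuallyEq hev).differentiableWithinAt
  · intro z hz
    rcases eq_or_ne z a with rfl | hza
    · have h1 := hfac.self_of_nhds
      have h2 : f₁ z = g z := by simp [hf₁]
      rw [h1, h2]
    · rw [hform z hza, mul_comm, div_mul_cancel₀ _ (pow_ne_zero _ (sub_ne_zero.mpr hza))]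


lemma memball_of_circle {r : ℝ} (hr : 0 < r) (hr1 : r < 1) (θ : ℝ) :
    (r:ℂ) * ce θ ∈ ball (0:ℂ) 1 := by
  simp only [mem_ball, dist_zero_right, norm_mul, Complex.norm_real, Real.norm_eq_abs,
    abs_of_pos hr]
  rw [show ‖ce θ‖ = 1 from abs_ce θ]
  simpa using hr1

lemma abs_circle {r : ℝ} (hr : 0 < r) (θ : ℝ) :
    Complex.abs ((r:ℂ) * ce θ) = r := by
  rw [map_mul, abs_ce, mul_one, Complex.abs_ofReal, abs_of_pos hr]

lemma jensen : ∀ (k : ℕ) (f : ℂ → ℂ), DifferentiableOn ℂ f (ball 0 1) → f 0 ≠ 0 →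
    ∀ (r : ℝ), 0 < r → r < 1 → (∀ z ∈ sphere (0:ℂ) r, f z ≠ 0) →
    ({z | z ∈ closedBall (0:ℂ) r ∧ f z = 0}).ncard = k →
    2 * Real.pi * Real.log (Complex.abs (f 0))
      ≤ ∫ θ in (0:ℝ)..(2*Real.pi), Real.log (Complex.abs (f ((r:ℂ) * ce θ))) := by
  intro k
  induction k with
  | zero =>
    intro f hf hf0 r hr hr1 hsph hcard
    have h0mem : (0:ℂ) ∈ ball (0:ℂ) 1 := mem_ball_self one_pos
    have hfin : {z | z ∈ closedBall (0:ℂ) r ∧ f z = 0}.Finite :=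
      zerosFinite hf h0mem hf0 hr1
    have hempty : {z | z ∈ closedBall (0:ℂ) r ∧ f z = 0} = ∅ :=
      (Set.ncard_eq_zero hfin).mp hcard
    set r' : ℝ := (r+1)/2 with hr'
    have hrr' : r < r' := by rw [hr']; linarith
    have hr'1 : r' < 1 := by rw [hr']; linarith
    have hfin' : {z | z ∈ closedBall (0:ℂ) r' ∧ f z = 0}.Finite :=
      zerosFinite hf h0mem hf0 hr'1
    have hKgt : ∀ z, z ∈ closedBall (0:ℂ) r' → f z = 0 → r < Complex.abs z := by
      intro z hz hfz
      by_contra hle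
      push_neg at hle
      have : z ∈ ({z | z ∈ closedBall (0:ℂ) r ∧ f z = 0} : Set ℂ) :=
        ⟨by simpa [mem_closedBall, Complex.dist_eq, sub_zero, Complex.norm_eq_abs] using hle, hfz⟩
      rw [hempty] at this
      exact this
    -- find ρ with r < ρ ≤ r' and no zeros in ball ρ
    obtain ⟨ρ, hρr, hρr', hρnv⟩ :
        ∃ ρ : ℝ, r < ρ ∧ ρ ≤ r' ∧ ∀ z ∈ ball (0:ℂ) ρ, f z ≠ 0 := by
      by_cases hne : ({z | z ∈ closedBall (0:ℂ) r' ∧ f z = 0} : Set ℂ).Nonempty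
      · obtain ⟨z₀, hz₀mem, hz₀min⟩ := Set.exists_min_image _ Complex.abs hfin' hne
        refine ⟨min r' (Complex.abs z₀), ?_, min_le_left _ _, ?_⟩
        · exact lt_min hrr' (hKgt z₀ hz₀mem.1 hz₀mem.2)
        · intro z hz hfz
          simp only [mem_ball, dist_zero_right, Complex.norm_eq_abs, lt_min_iff] at hz
          have hzK : z ∈ ({z | z ∈ closedBall (0:ℂ) r' ∧ f z = 0} : Set ℂ) := by
            refine ⟨?_, hfz⟩
            simp only [mem_closedBall, Complex.dist_eq, sub_zero, Complex.norm_eq_abs]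
            exact le_of_lt (lt_of_lt_of_le hz.1 (le_refl r'))
          have := hz₀min z hzK
          linarith [hz.2]
      · refine ⟨r', hrr', le_refl _, ?_⟩
        intro z hz hfz
        apply hne
        exact ⟨z, ball_subset_closedBall hz, hfz⟩
    have hsub1 : ball (0:ℂ) ρ ⊆ ball 0 1 :=
      ball_subset_ball (le_of_lt (lt_of_le_of_lt hρr' hr'1))
    have := logAvg (hf.mono hsub1) hρnv hr hρr
    linarith [this]
  | succ k ih =>
    intro f hf hf0 r hr hr1 hsph hcard
    have h0mem : (0:ℂ) ∈ ball (0:ℂ) 1 := mem_ball_self one_pos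
    have hfin : {z | z ∈ closedBall (0:ℂ) r ∧ f z = 0}.Finite :=
      zerosFinite hf h0mem hf0 hr1
    have hne : ({z | z ∈ closedBall (0:ℂ) r ∧ f z = 0} : Set ℂ).Nonempty := by
      apply Set.nonempty_of_ncard_ne_zero
      omega
    obtain ⟨a, haZ⟩ := hne
    obtain ⟨hacb, hfa⟩ := haZ
    have habs_le : Complex.abs a ≤ r := by
      simpa [mem_closedBall, Complex.dist_eq, sub_zero, Complex.norm_eq_abs] using hacb
    have habs_lt : Complex.abs a < r := by
      rcases lt_or_eq_of_le habs_le with h | h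
      · exact h
      · exfalso
        apply hsph a _ hfa
        simp [mem_sphere, Complex.dist_eq, sub_zero, h]
    have ha1 : a ∈ ball (0:ℂ) 1 := by
      simp only [mem_ball, dist_zero_right, Complex.norm_eq_abs]
      linarith
    have ha0 : (0:ℝ) < Complex.abs a := by
      rw [Complex.abs.pos_iff]
      intro h
      rw [h] at hfa
      exact hf0 hfa
    obtain ⟨n, g, hgan, hgne, hfac, _⟩ := orderFac hf h0mem hf0 ha1
    obtain ⟨f₁, hd₁, hf₁a, hfaceq, hform⟩ := divideOut hf ha1 hgan hgne hfac
    have hane : a ≠ 0 := by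
      intro h; rw [h] at hfa; exact hf0 hfa
    have hf₁0 : f₁ 0 ≠ 0 := by
      intro h
      apply hf0
      rw [hfaceq 0 h0mem, h, mul_zero]
    have hsphsub : ∀ z ∈ sphere (0:ℂ) r, z ∈ ball (0:ℂ) 1 := by
      intro z hz
      simp only [mem_sphere, Complex.dist_eq, sub_zero, Complex.norm_eq_abs] at hz
      simp only [mem_ball, dist_zero_right, Complex.norm_eq_abs]
      rw [hz]; exact hr1
    have hf₁sph : ∀ z ∈ sphere (0:ℂ) r, f₁ z ≠ 0 := by
      intro z hz h0
      apply hsph z hz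
      rw [hfaceq z (hsphsub z hz), h0, mul_zero]
    have hZ₁ : {z | z ∈ closedBall (0:ℂ) r ∧ f₁ z = 0}
        = {z | z ∈ closedBall (0:ℂ) r ∧ f z = 0} \ {a} := by
      ext z
      simp only [mem_setOf_eq, mem_diff, mem_singleton_iff]
      constructor
      · rintro ⟨hzc, hz0⟩
        have hza : z ≠ a := by
          intro h; rw [h, hf₁a] at hz0; exact hgne hz0
        refine ⟨⟨hzc, ?_⟩, hza⟩
        have hz1 : z ∈ ball (0:ℂ) 1 := by
          simp only [mem_closedBall, Complex.dist_eq, sub_zero, Complex.norm_eq_abs] at hzc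
          simp only [mem_ball, dist_zero_right, Complex.norm_eq_abs]
          linarith
        rw [hfaceq z hz1, hz0, mul_zero]
      · rintro ⟨⟨hzc, hz0⟩, hza⟩
        refine ⟨hzc, ?_⟩
        rw [hform z hza, hz0, zero_div]
    have hcard₁ : ({z | z ∈ closedBall (0:ℂ) r ∧ f₁ z = 0}).ncard = k := by
      have hamem : a ∈ {z | z ∈ closedBall (0:ℂ) r ∧ f z = 0} := ⟨hacb, hfa⟩
      rw [hZ₁, Set.ncard_diff_singleton_of_mem hamem, hcard]
      omega
    have IH := ih f₁ hd₁ hf₁0 r hr hr1 hf₁sph hcard₁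
    -- pointwise decomposition on the circle
    have hcircne : ∀ θ : ℝ, (r:ℂ) * ce θ - a ≠ 0 := by
      intro θ h
      have := abs_circle hr θ
      rw [sub_eq_zero] at h
      rw [h] at this
      linarith
    have hlogeq : ∀ θ : ℝ, Real.log (Complex.abs (f ((r:ℂ) * ce θ)))
        = n * Real.log (Complex.abs ((r:ℂ) * ce θ - a))
          + Real.log (Complex.abs (f₁ ((r:ℂ) * ce θ))) := by
      intro θ
      have hzball := memball_of_circle hr hr1 θ
      have hzsph : (r:ℂ) * ce θ ∈ sphere (0:ℂ) r := by
        simp only [mem_sphere, Complex.dist_eq, sub_zero, Complex.norm_eq_abs]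
        exact abs_circle hr θ
      rw [hfaceq _ hzball, map_mul, map_pow,
        Real.log_mul (pow_ne_zero _ (by simp only [ne_eq, map_eq_zero]; exact hcircne θ))
          (by simpa using hf₁sph _ hzsph),
        Real.log_pow]
    -- continuity of the two pieces
    have hcont1 : Continuous fun θ : ℝ => Real.log (Complex.abs ((r:ℂ) * ce θ - a)) := by
      rw [continuous_iff_continuousAt]
      intro θ
      have h1 : Continuous fun θ : ℝ => Complex.abs ((r:ℂ) * ce θ - a) :=
        Complex.continuous_abs.comp ((continuous_const.mul ce_cont).sub continuous_const)
      exact (Real.continuousAt_log (by simp only [ne_eq, map_eq_zero]; exact hcircne θ)).comp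
        h1.continuousAt
    have hcont2 : Continuous fun θ : ℝ => Real.log (Complex.abs (f₁ ((r:ℂ) * ce θ))) := by
      rw [continuous_iff_continuousAt]
      intro θ
      have h1 : Continuous fun θ : ℝ => Complex.abs (f₁ ((r:ℂ) * ce θ)) :=
        Complex.continuous_abs.comp
          (hd₁.continuousOn.comp_continuous (continuous_const.mul ce_cont)
            (fun θ => memball_of_circle hr hr1 θ))
      have hzsph : (r:ℂ) * ce θ ∈ sphere (0:ℂ) r := by
        simp only [mem_sphere, Complex.dist_eq, sub_zero, Complex.norm_eq_abs]
        exact abs_circle hr θ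
      exact (Real.continuousAt_log (by simpa using hf₁sph _ hzsph)).comp h1.continuousAt
    -- |f 0| = |a|^n * |f₁ 0|
    have hlogf0 : Real.log (Complex.abs (f 0))
        = n * Real.log (Complex.abs a) + Real.log (Complex.abs (f₁ 0)) := by
      rw [hfaceq 0 h0mem, map_mul, map_pow,
        Real.log_mul (pow_ne_zero _ (by simp [Complex.abs.ne_zero_iff]; exact hane))
          (by simpa using hf₁0), Real.log_pow]
      congr 2
      rw [zero_sub, map_neg_eq_map]
    have hlogle : Real.log (Complex.abs a) ≤ Real.log r :=
      Real.log_le_log ha0 habs_lt.le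
    calc 2 * Real.pi * Real.log (Complex.abs (f 0))
        = 2 * Real.pi * ((n : ℝ) * Real.log (Complex.abs a)
            + Real.log (Complex.abs (f₁ 0))) := by rw [hlogf0]
      _ ≤ 2 * Real.pi * ((n : ℝ) * Real.log r + Real.log (Complex.abs (f₁ 0))) := by
          apply mul_le_mul_of_nonneg_left _ (by positivity)
          have := mul_le_mul_of_nonneg_left hlogle (by positivity : (0:ℝ) ≤ (n:ℝ))
          linarith
      _ = (n : ℝ) * (2 * Real.pi * Real.log r)
            + 2 * Real.pi * Real.log (Complex.abs (f₁ 0)) := by ring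
      _ ≤ (n : ℝ) * (2 * Real.pi * Real.log r)
            + ∫ θ in (0:ℝ)..(2*Real.pi), Real.log (Complex.abs (f₁ ((r:ℂ) * ce θ))) := by
          linarith [IH]
      _ = (n : ℝ) * (∫ θ in (0:ℝ)..(2*Real.pi), Real.log (Complex.abs ((r:ℂ) * ce θ - a)))
            + ∫ θ in (0:ℝ)..(2*Real.pi), Real.log (Complex.abs (f₁ ((r:ℂ) * ce θ))) := by
          rw [pfl hr habs_lt]
      _ = ∫ θ in (0:ℝ)..(2*Real.pi), ((n : ℝ) * Real.log (Complex.abs ((r:ℂ) * ce θ - a))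
            + Real.log (Complex.abs (f₁ ((r:ℂ) * ce θ)))) := by
          rw [intervalIntegral.integral_add ((hcont1.intervalIntegrable _ _).const_mul _)
            (hcont2.intervalIntegrable _ _), intervalIntegral.integral_const_mul]
      _ = ∫ θ in (0:ℝ)..(2*Real.pi), Real.log (Complex.abs (f ((r:ℂ) * ce θ))) := by
          refine intervalIntegral.integral_congr fun θ _ => ?_
          exact (hlogeq θ).symm


theorem stmt2 (f : ℂ → ℂ) (C : ℝ)
    (hf : DifferentiableOn ℂ f (ball 0 1))
    (hb : ∀ z ∈ ball (0:ℂ) 1, ‖f z‖ ≤ C)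
    (E : Set ℝ) (hEmeas : MeasurableSet E) (hEsub : E ⊆ Set.Ico 0 (2 * Real.pi))
    (hEpos : 0 < volume E)
    (hlim : ∀ θ ∈ E,
      Tendsto (fun r : ℝ => f ((r : ℂ) * Complex.exp (θ * Complex.I)))
        (nhdsWithin 1 (Set.Iio 1)) (nhds 0)) :
    ∀ z ∈ ball (0:ℂ) 1, f z = 0 := by
  by_contra hcon
  push_neg at hcon
  obtain ⟨z₀, hz₀b, hz₀⟩ := hcon
  have h0mem : (0:ℂ) ∈ ball (0:ℂ) 1 := mem_ball_self one_pos
  have hC0 : 0 ≤ C := le_trans (Complex.abs.nonneg _) (hb 0 h0mem)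
  -- factor out z^n at the origin
  obtain ⟨n, g, hgan, hgne, hfac, _⟩ := orderFac hf hz₀b hz₀ h0mem
  obtain ⟨f₁, hd₁, hf₁0eq, hfaceq, hform⟩ := divideOut hf h0mem hgan hgne hfac
  have hf₁0 : f₁ 0 ≠ 0 := by rw [hf₁0eq]; exact hgne
  -- bound for f₁
  obtain ⟨C₁, hC₁⟩ := (isCompact_closedBall (0:ℂ) (1/2)).exists_bound_of_continuousOn
    (hd₁.continuousOn.mono (closedBall_subset_ball (by norm_num)))
  have hbd₁ : ∀ z ∈ ball (0:ℂ) 1, Complex.abs (f₁ z) ≤ max C₁ (C / (1/2)^n) := by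
    intro z hz
    by_cases hz2 : Complex.abs z ≤ 1/2
    · exact le_trans (hC₁ z (by simpa [mem_closedBall, Complex.dist_eq, sub_zero, Complex.norm_eq_abs] using hz2))
        (le_max_left _ _)
    · push_neg at hz2
      have hzne : z ≠ 0 := by
        intro h; rw [h] at hz2; simp at hz2; linarith
      have hzpow : ((1:ℝ)/2)^n ≤ (Complex.abs z)^n :=
        pow_le_pow_left₀ (by norm_num) hz2.le n
      have : Complex.abs (f₁ z) = Complex.abs (f z) / (Complex.abs z)^n := by
        rw [hform z hzne, map_div₀, map_pow]
        simp
      rw [this]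
      refine le_trans (div_le_div₀ hC0 (hb z hz) (by positivity) hzpow) (le_max_right _ _)
  set C₂ : ℝ := max (max C₁ (C / (1/2)^n)) 1 with hC₂def
  have hC₂1 : (1:ℝ) ≤ C₂ := le_max_right _ _
  have hbd₂ : ∀ z ∈ ball (0:ℂ) 1, Complex.abs (f₁ z) ≤ C₂ :=
    fun z hz => le_trans (hbd₁ z hz) (le_max_left _ _)
  -- radial limits of f₁ on E
  have hlim₁ : ∀ θ ∈ E, Tendsto (fun r : ℝ => f₁ ((r:ℂ) * ce θ))
      (nhdsWithin 1 (Set.Iio 1)) (nhds 0) := by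
    intro θ hθ
    have hev : (fun r : ℝ => f ((r:ℂ) * ce θ) / ((r:ℂ) * ce θ - 0) ^ n)
        =ᶠ[nhdsWithin 1 (Set.Iio 1)] (fun r : ℝ => f₁ ((r:ℂ) * ce θ)) := by
      filter_upwards [Ioo_mem_nhdsLT_of_mem (show (1:ℝ) ∈ Set.Ioc 0 1 by norm_num)]
        with r hr
      have hrne : ((r:ℂ) * ce θ) ≠ 0 :=
        mul_ne_zero (by exact_mod_cast (show r ≠ 0 by linarith [hr.1])) (Complex.exp_ne_zero _)
      rw [hform _ hrne]
    have hden : Tendsto (fun r : ℝ => ((r:ℂ) * ce θ - 0) ^ n)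
        (nhdsWithin 1 (Set.Iio 1)) (nhds ((ce θ) ^ n)) := by
      have hcont : Continuous (fun r : ℝ => ((r:ℂ) * ce θ - 0) ^ n) := by fun_prop
      have := (hcont.tendsto 1).mono_left
        (nhdsWithin_le_nhds (s := Set.Iio (1:ℝ)))
      simpa using this
    have hnum : Tendsto (fun r : ℝ => f ((r:ℂ) * ce θ))
        (nhdsWithin 1 (Set.Iio 1)) (nhds 0) := hlim θ hθ
    have := (hnum.div hden (pow_ne_zero _ (Complex.exp_ne_zero _)))
    rw [zero_div] at this
    exact this.congr' hev
  -- countable set of zero moduli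
  set Zall : Set ℂ := {z | z ∈ ball (0:ℂ) 1 ∧ f₁ z = 0} with hZall
  have hZcount : Zall.Countable := by
    have hsub : Zall ⊆ ⋃ m : ℕ,
        {z | z ∈ closedBall (0:ℂ) (1 - 1/(m+2)) ∧ f₁ z = 0} := by
      intro z hz
      obtain ⟨hzb, hz0⟩ := hz
      simp only [mem_ball, dist_zero_right, Complex.norm_eq_abs] at hzb
      obtain ⟨m, hm⟩ := exists_nat_one_div_lt (show 0 < 1 - Complex.abs z by linarith)
      refine Set.mem_iUnion.mpr ⟨m, ⟨?_, hz0⟩⟩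
      simp only [mem_closedBall, Complex.dist_eq, sub_zero, Complex.norm_eq_abs]
      have h2 : 1/((m:ℝ)+2) ≤ 1/((m:ℝ)+1) := by
        apply div_le_div_of_nonneg_left (by norm_num) (by positivity) (by linarith)
      have : Complex.abs z ≤ 1 - 1/((m:ℝ)+1) := by linarith
      push_cast
      linarith
    refine Set.Countable.mono hsub ?_
    apply Set.countable_iUnion
    intro m
    exact (zerosFinite hd₁ h0mem hf₁0 (by
      have : (0:ℝ) < 1/((m:ℝ)+2) := by positivity
      push_cast
      linarith)).countable
  set M : Set ℝ := Complex.abs '' Zall with hM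
  have hMcount : M.Countable := hZcount.image _
  have hMnull : volume M = 0 := hMcount.measure_zero _
  -- select radii
  have hsel : ∀ m : ℕ, ∃ r : ℝ, r ∈ Set.Ioo (max (1 - 1/((m:ℝ)+1)) (1/2)) 1 ∧ r ∉ M := by
    intro m
    set L : ℝ := max (1 - 1/((m:ℝ)+1)) (1/2) with hL
    have hL1 : L < 1 := by
      apply max_lt _ (by norm_num)
      have : (0:ℝ) < 1/((m:ℝ)+1) := by positivity
      linarith
    by_contra hc
    push_neg at hc
    have hsub : Set.Ioo L 1 ⊆ M := fun r hr => hc r hr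
    have := measure_mono_null hsub hMnull
    rw [Real.volume_Ioo] at this
    rw [ENNReal.ofReal_eq_zero] at this
    linarith
  choose rseq hrIoo hrM using hsel
  have hrpos : ∀ m, 0 < rseq m := by
    intro m
    have h1 := (hrIoo m).1
    have h2 : (1:ℝ)/2 ≤ max (1 - 1/((m:ℝ)+1)) (1/2) := le_max_right _ _
    linarith
  have hrlt1 : ∀ m, rseq m < 1 := fun m => (hrIoo m).2
  have hrsph : ∀ m, ∀ z ∈ sphere (0:ℂ) (rseq m), f₁ z ≠ 0 := by
    intro m z hz h0
    apply hrM m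
    simp only [mem_sphere, Complex.dist_eq, sub_zero, Complex.norm_eq_abs] at hz
    exact ⟨z, ⟨by
      simp only [mem_ball, dist_zero_right, Complex.norm_eq_abs]
      rw [hz]; exact hrlt1 m, h0⟩, hz⟩
  have hrtend : Tendsto rseq atTop (nhdsWithin 1 (Set.Iio 1)) := by
    apply tendsto_nhdsWithin_of_tendsto_nhds_of_eventually_within
    · apply tendsto_of_tendsto_of_tendsto_of_le_of_le
        (g := fun m : ℕ => 1 - 1/((m:ℝ)+1)) (h := fun _ => (1:ℝ))
      · have h1 : Tendsto (fun m : ℕ => 1/((m:ℝ)+1)) atTop (nhds 0) :=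
          tendsto_one_div_add_atTop_nhds_zero_nat
        have := tendsto_const_nhds (x := (1:ℝ)) (f := atTop (α := ℕ)) |>.sub h1
        simpa using this
      · exact tendsto_const_nhds
      · intro m
        have h1 := (hrIoo m).1
        have h2 : 1 - 1/((m:ℝ)+1) ≤ max (1 - 1/((m:ℝ)+1)) (1/2) := le_max_left _ _
        linarith
      · exact fun m => (hrlt1 m).le
    · exact Eventually.of_forall (fun m => hrlt1 m)
  -- constants
  have hπ : (0:ℝ) < 2 * Real.pi := by positivity
  set q : ℝ := Complex.abs (f₁ 0) with hqdef
  have hq : 0 < q := by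
    rw [hqdef]
    simpa [Complex.abs.pos_iff] using hf₁0
  have hqC₂ : q ≤ C₂ := hbd₂ 0 h0mem
  have hEfin : volume E ≠ ⊤ := by
    have h1 : volume E ≤ volume (Set.Ico 0 (2*Real.pi)) := measure_mono hEsub
    rw [Real.volume_Ico] at h1
    exact (h1.trans_lt ENNReal.ofReal_lt_top).ne
  set δ : ℝ := (volume E).toReal with hδdef
  have hδpos : 0 < δ := ENNReal.toReal_pos hEpos.ne' hEfin
  have hδle : δ ≤ 2 * Real.pi := by
    have h1 : volume E ≤ volume (Set.Ico 0 (2*Real.pi)) := measure_mono hEsub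
    have h2 := ENNReal.toReal_mono (by rw [Real.volume_Ico]; exact ENNReal.ofReal_ne_top) h1
    rw [Real.volume_Ico, ENNReal.toReal_ofReal (by linarith [Real.pi_pos])] at h2
    linarith
  have hlogC₂ : 0 ≤ Real.log C₂ := Real.log_nonneg hC₂1
  -- key inequality for every ε ∈ (0,1]
  have KEY : ∀ ε : ℝ, 0 < ε → ε ≤ 1 →
      2 * Real.pi * Real.log q ≤ δ * Real.log ε + (2*Real.pi - δ) * Real.log C₂ := by
    intro ε hε hε1
    set ℓ : ℕ → ℝ → ℝ :=
      fun m θ => Real.log (max (Complex.abs (f₁ ((rseq m : ℂ) * ce θ))) ε) with hℓdef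
    have hℓcont : ∀ m, Continuous (ℓ m) := by
      intro m
      have h1 : Continuous fun θ : ℝ => max (Complex.abs (f₁ ((rseq m : ℂ) * ce θ))) ε := by
        apply Continuous.max _ continuous_const
        exact Complex.continuous_abs.comp
          (hd₁.continuousOn.comp_continuous (continuous_const.mul ce_cont)
            (fun θ => memball_of_circle (hrpos m) (hrlt1 m) θ))
      rw [continuous_iff_continuousAt]
      intro θ
      exact (Real.continuousAt_log (by
        have : ε ≤ max (Complex.abs (f₁ ((rseq m : ℂ) * ce θ))) ε := le_max_right _ _
        linarith)).comp h1.continuousAt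
    have hℓlb : ∀ m θ, Real.log ε ≤ ℓ m θ :=
      fun m θ => Real.log_le_log hε (le_max_right _ _)
    have hℓub : ∀ m θ, ℓ m θ ≤ Real.log C₂ := by
      intro m θ
      apply Real.log_le_log (lt_of_lt_of_le hε (le_max_right _ _))
      apply max_le _ (hε1.trans hC₂1)
      exact hbd₂ _ (memball_of_circle (hrpos m) (hrlt1 m) θ)
    -- step 1: jensen + monotonicity
    have hstep1 : ∀ m, 2 * Real.pi * Real.log q
        ≤ ∫ θ in (0:ℝ)..(2*Real.pi), ℓ m θ := by
      intro m
      have hjen := jensen _ f₁ hd₁ hf₁0 (rseq m) (hrpos m) (hrlt1 m) (hrsph m) rfl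
      refine le_trans hjen (intervalIntegral.integral_mono_on hπ.le ?_ ?_ ?_)
      · -- integrability of log |f₁ (r ce θ)|
        have hcont2 : Continuous fun θ : ℝ =>
            Real.log (Complex.abs (f₁ ((rseq m : ℂ) * ce θ))) := by
          have h1 : Continuous fun θ : ℝ => Complex.abs (f₁ ((rseq m:ℂ) * ce θ)) :=
            Complex.continuous_abs.comp
              (hd₁.continuousOn.comp_continuous (continuous_const.mul ce_cont)
                (fun θ => memball_of_circle (hrpos m) (hrlt1 m) θ))
          rw [continuous_iff_continuousAt]
          intro θ
          have hzsph : (rseq m : ℂ) * ce θ ∈ sphere (0:ℂ) (rseq m) := by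
            simp only [mem_sphere, Complex.dist_eq, sub_zero, Complex.norm_eq_abs]
            exact abs_circle (hrpos m) θ
          exact (Real.continuousAt_log (by simpa using hrsph m _ hzsph)).comp h1.continuousAt
        exact hcont2.intervalIntegrable _ _
      · exact (hℓcont m).intervalIntegrable _ _
      · intro θ _
        have hzsph : (rseq m : ℂ) * ce θ ∈ sphere (0:ℂ) (rseq m) := by
          simp only [mem_sphere, Complex.dist_eq, sub_zero, Complex.norm_eq_abs]
          exact abs_circle (hrpos m) θ
        apply Real.log_le_log _ (le_max_left _ _)
        have := hrsph m _ hzsph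
        simpa [Complex.abs.pos_iff] using this
    -- step 2: split the integral over E and its complement
    have hsplit : ∀ m, ∫ θ in (0:ℝ)..(2*Real.pi), ℓ m θ
        = (∫ θ in E, ℓ m θ) + ∫ θ in (Set.Ico (0:ℝ) (2*Real.pi) \ E), ℓ m θ := by
      intro m
      have hint : IntegrableOn (ℓ m) (Set.Ico (0:ℝ) (2*Real.pi)) volume :=
        ((hℓcont m).integrableOn_Icc).mono_set Set.Ico_subset_Icc_self
      have hunion : E ∪ (Set.Ico (0:ℝ) (2*Real.pi) \ E) = Set.Ico 0 (2*Real.pi) :=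
        Set.union_diff_cancel hEsub
      have h1 := MeasureTheory.setIntegral_union (f := ℓ m) (μ := volume)
        disjoint_sdiff_right (measurableSet_Ico.diff hEmeas)
        (hint.mono_set hEsub) (hint.mono_set Set.diff_subset)
      rw [hunion] at h1
      rw [intervalIntegral.integral_of_le hπ.le,
        MeasureTheory.integral_Ioc_eq_integral_Ioo,
        ← MeasureTheory.integral_Ico_eq_integral_Ioo, h1]
    have hvol : (volume (Set.Ico (0:ℝ) (2*Real.pi) \ E)).toReal = 2*Real.pi - δ := by
      rw [measure_diff hEsub hEmeas.nullMeasurableSet hEfin]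
      rw [Real.volume_Ico]
      rw [ENNReal.toReal_sub_of_le (by rw [← Real.volume_Ico (a := (0:ℝ))]; exact measure_mono hEsub)
        ENNReal.ofReal_ne_top]
      rw [ENNReal.toReal_ofReal (by linarith [Real.pi_pos])]
      simp [hδdef]
    have hstep2 : ∀ m, ∫ θ in (Set.Ico (0:ℝ) (2*Real.pi) \ E), ℓ m θ
        ≤ (2*Real.pi - δ) * Real.log C₂ := by
      intro m
      have hint : IntegrableOn (ℓ m) (Set.Ico (0:ℝ) (2*Real.pi) \ E) volume :=
        (((hℓcont m).integrableOn_Icc).mono_set Set.Ico_subset_Icc_self).mono_set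
          Set.diff_subset
      calc ∫ θ in (Set.Ico (0:ℝ) (2*Real.pi) \ E), ℓ m θ
          ≤ ∫ _ in (Set.Ico (0:ℝ) (2*Real.pi) \ E), Real.log C₂ := by
            apply setIntegral_mono_on hint (integrableOn_const
              (LT.lt.ne (lt_of_le_of_lt (measure_mono Set.diff_subset) (by
                rw [Real.volume_Ico]; exact ENNReal.ofReal_lt_top))))
              (measurableSet_Ico.diff hEmeas)
            exact fun θ _ => hℓub m θ
        _ = (2*Real.pi - δ) * Real.log C₂ := by
            rw [setIntegral_const, smul_eq_mul, measureReal_def, hvol]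
    -- step 3: dominated convergence on E
    haveI : Fact (volume E < ⊤) := ⟨lt_top_iff_ne_top.mpr hEfin⟩
    have hdom : Tendsto (fun m => ∫ θ in E, ℓ m θ) atTop (nhds (δ * Real.log ε)) := by
      have hlimit : ∫ θ in E, (fun _ : ℝ => Real.log ε) θ ∂volume = δ * Real.log ε := by
        rw [setIntegral_const, smul_eq_mul, measureReal_def]
      rw [← hlimit]
      apply MeasureTheory.tendsto_integral_of_dominated_convergence
        (bound := fun _ => max (-Real.log ε) (Real.log C₂))
      · exact fun m => ((hℓcont m).aestronglyMeasurable)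
      · exact integrable_const _
      · intro m
        apply Eventually.of_forall
        intro θ
        rw [Real.norm_eq_abs, abs_le]
        constructor
        · have h1 := hℓlb m θ
          have h2 : -Real.log ε ≤ max (-Real.log ε) (Real.log C₂) := le_max_left _ _
          linarith
        · exact le_trans (hℓub m θ) (le_max_right _ _)
      · rw [ae_restrict_iff' hEmeas]
        apply Eventually.of_forall
        intro θ hθ
        have habs : Tendsto (fun m => Complex.abs (f₁ ((rseq m : ℂ) * ce θ)))
            atTop (nhds 0) := by
          have h1 := (hlim₁ θ hθ).comp hrtend
          have h2 := (Complex.continuous_abs.tendsto 0).comp h1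
          simpa [Function.comp_def] using h2
        have hmax : Tendsto (fun m => max (Complex.abs (f₁ ((rseq m : ℂ) * ce θ))) ε)
            atTop (nhds ε) := by
          have := habs.max (tendsto_const_nhds (x := ε))
          rwa [max_eq_right hε.le] at this
        exact ((Real.continuousAt_log hε.ne').tendsto).comp hmax
    -- combine
    have hcomb : ∀ m, 2 * Real.pi * Real.log q
        ≤ (∫ θ in E, ℓ m θ) + (2*Real.pi - δ) * Real.log C₂ := by
      intro m
      have := hstep1 m
      rw [hsplit m] at this
      linarith [hstep2 m]
    have htend2 : Tendsto (fun m => (∫ θ in E, ℓ m θ) + (2*Real.pi - δ) * Real.log C₂)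
        atTop (nhds (δ * Real.log ε + (2*Real.pi - δ) * Real.log C₂)) :=
      hdom.add_const _
    exact ge_of_tendsto htend2 (Eventually.of_forall hcomb)
  -- choose ε small enough to get a contradiction
  set X : ℝ := (2 * Real.pi * Real.log q - (2*Real.pi - δ) * Real.log C₂ - 1) / δ with hX
  set ε : ℝ := min 1 (Real.exp X) with hε
  have hεpos : 0 < ε := lt_min one_pos (Real.exp_pos X)
  have hε1 : ε ≤ 1 := min_le_left _ _
  have hlogε : Real.log ε ≤ X := by
    calc Real.log ε ≤ Real.log (Real.exp X) :=
          Real.log_le_log hεpos (min_le_right _ _)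
      _ = X := Real.log_exp X
  have hkey := KEY ε hεpos hε1
  have hfin : δ * Real.log ε ≤ 2 * Real.pi * Real.log q - (2*Real.pi - δ) * Real.log C₂ - 1 := by
    have := mul_le_mul_of_nonneg_left hlogε hδpos.le
    rw [hX] at this
    rw [mul_div_cancel₀ _ hδpos.ne'] at this
    linarith
  linarith
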